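/- For each i ∈ {1,2,3}, the fixed subgroup of the involutive automorphism g ↦ σ_i g σ_i of F_{4(-20)} equals the stabilizer of E_i: (F_{4(-20)})^{σ̃_i} = (F_{4(-20)})_{E_i}. In particular K = (F_{4(-20)})^{σ̃_1} = (F_{4(-20)})_{E_1} = Spin(9), and (F_{4(-20)})^{σ̃_2} = (F_{4(-20)})_{E_2} ≅ Spin^0(8,1). -/

import Mathlib

noncomputable section
/-! ## The octonions, realized via the Cayley–Dickson construction on the quaternions -/

/-- The octonions `𝕆 = ℍ ⊕ ℍ`. -/
abbrev Oct : Type := Quaternion ℝ × Quaternion ℝ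

/-- Octonion multiplication `(a,b)(c,d) = (ac - d̄b, da + bc̄)`. -/
def omul (x y : Oct) : Oct :=
  (x.1 * y.1 - star y.2 * x.2, y.2 * x.1 + x.2 * star y.1)

/-- Octonion conjugation `x ↦ x̄`. -/
def oconj (x : Oct) : Oct := (star x.1, -x.2)

/-- The unit octonion `1`. -/
def oone : Oct := (1, 0)

/-- The real (scalar) part `Re(x)` of an octonion. -/
def oRe (x : Oct) : ℝ := x.1.re

/-- The standard inner product `(x|y)` on the octonions. -/
def oinner (x y : Oct) : ℝ := (x.1 * star y.1).re + (x.2 * star y.2).re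

/-- The norm form `n(x) = (x|x)`. -/
def onorm (x : Oct) : ℝ := oinner x x

/-- The imaginary (vector) part `Im(x)` of an octonion. -/
def oIm (x : Oct) : Oct := x - oRe x • oone

theorem oRe_add (x y : Oct) : oRe (x + y) = oRe x + oRe y := by
  simp [oRe]

theorem oRe_sub (x y : Oct) : oRe (x - y) = oRe x - oRe y := by
  simp [oRe]

theorem oRe_smul (c : ℝ) (x : Oct) : oRe (c • x) = c * oRe x := by
  simp [oRe]

theorem oRe_oone : oRe oone = 1 := by
  simp [oRe, oone, Quaternion.re_one]

/-- The space `Im 𝕆` of imaginary octonions. -/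
def ImOct : Submodule ℝ Oct where
  carrier := {x | oRe x = 0}
  add_mem' := by
    intro a b ha hb
    simp only [Set.mem_setOf_eq] at *
    rw [oRe_add, ha, hb, add_zero]
  zero_mem' := by
    show oRe 0 = 0
    simp [oRe, Quaternion.re_zero]
  smul_mem' := by
    intro c x hx
    simp only [Set.mem_setOf_eq] at *
    rw [oRe_smul, hx, mul_zero]

theorem oIm_mem (z : Oct) : oIm z ∈ ImOct := by
  show oRe (oIm z) = 0
  show oRe (z - oRe z • oone) = 0
  rw [oRe_sub, oRe_smul, oRe_oone, mul_one, sub_self]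

theorem oinner_oone (x : Oct) : oinner x oone = oRe x := by
  simp [oinner, oone, oRe, Quaternion.re_zero]
/-! ## Small helper lemmas on the automorphism group of a module -/

theorem le_mul_apply {M : Type*} [AddCommMonoid M] [Module ℝ M] (a b : M ≃ₗ[ℝ] M) (x : M) :
    (a * b) x = a (b x) := rfl

theorem le_one_apply {M : Type*} [AddCommMonoid M] [Module ℝ M] (x : M) :
    (1 : M ≃ₗ[ℝ] M) x = x := rfl

theorem le_apply_inv_apply {M : Type*} [AddCommMonoid M] [Module ℝ M] (a : M ≃ₗ[ℝ] M) (z : M) :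
    a (a⁻¹ z) = z := by
  rw [← le_mul_apply, mul_inv_cancel, le_one_apply]

theorem le_inv_apply_apply {M : Type*} [AddCommMonoid M] [Module ℝ M] (a : M ≃ₗ[ℝ] M) (z : M) :
    a⁻¹ (a z) = z := by
  rw [← le_mul_apply, inv_mul_cancel, le_one_apply]
/-! ## The exceptional Jordan algebra `J¹`

`J¹` is the real vector space `ℝ³ ⊕ 𝕆³`, whose element `((ξ₁,ξ₂,ξ₃),(x₁,x₂,x₃))`
represents the twisted-hermitian matrix `h¹(ξ₁,ξ₂,ξ₃; x₁,x₂,x₃)`, i.e.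
`ξ₁E₁ + ξ₂E₂ + ξ₃E₃ + F¹₁(x₁) + F¹₂(x₂) + F¹₃(x₃)`. -/

abbrev J1 : Type := (ℝ × ℝ × ℝ) × (Oct × Oct × Oct)

/-- `jmk a b c x y z = h¹(a,b,c;x,y,z)`. -/
def jmk (a b c : ℝ) (x y z : Oct) : J1 := ((a, b, c), (x, y, z))

def ja1 (X : J1) : ℝ := X.1.1
def ja2 (X : J1) : ℝ := X.1.2.1
def ja3 (X : J1) : ℝ := X.1.2.2
def jx1 (X : J1) : Oct := X.2.1
def jx2 (X : J1) : Oct := X.2.2.1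
def jx3 (X : J1) : Oct := X.2.2.2

/-- The Jordan product `X ∘ Y = (XY + YX)/2` of `J¹`, written out in components
(obtained by multiplying the twisted-hermitian matrices `h¹(ξ;x)` and `h¹(η;y)`). -/
def jmul (X Y : J1) : J1 :=
  jmk
    (ja1 X * ja1 Y - oinner (jx2 X) (jx2 Y) - oinner (jx3 X) (jx3 Y))
    (ja2 X * ja2 Y + oinner (jx1 X) (jx1 Y) - oinner (jx3 X) (jx3 Y))
    (ja3 X * ja3 Y + oinner (jx1 X) (jx1 Y) - oinner (jx2 X) (jx2 Y))
    ((2:ℝ)⁻¹ • ((ja2 X + ja3 X) • jx1 Y + (ja2 Y + ja3 Y) • jx1 X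
      - (oconj (omul (jx2 Y) (jx3 X)) + oconj (omul (jx2 X) (jx3 Y)))))
    ((2:ℝ)⁻¹ • ((ja3 X + ja1 X) • jx2 Y + (ja3 Y + ja1 Y) • jx2 X
      + (oconj (omul (jx3 Y) (jx1 X)) + oconj (omul (jx3 X) (jx1 Y)))))
    ((2:ℝ)⁻¹ • ((ja1 X + ja2 X) • jx3 Y + (ja1 Y + ja2 Y) • jx3 X
      + (oconj (omul (jx1 Y) (jx2 X)) + oconj (omul (jx1 X) (jx2 Y)))))

/-- The trace. -/
def jtr (X : J1) : ℝ := ja1 X + ja2 X + ja3 X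

/-- The identity element `E`. -/
def jE : J1 := jmk 1 1 1 0 0 0

/-- The inner product `(X|Y) = tr(X ∘ Y)`. -/
def jinner (X Y : J1) : ℝ := jtr (jmul X Y)

/-- Freudenthal's cross product
`X × Y = (2 X∘Y − tr(X)Y − tr(Y)X + (tr(X)tr(Y) − (X|Y))E)/2`. -/
def jcross (X Y : J1) : J1 :=
  (2:ℝ)⁻¹ • ((2:ℝ) • jmul X Y - jtr X • Y - jtr Y • X + (jtr X * jtr Y - jinner X Y) • jE)

/-- `X^{×2} = X × X`. -/
def jsq (X : J1) : J1 := jcross X X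

/-- The determinant `det X = (X|X×X)/3`. -/
def jdet (X : J1) : ℝ := (3:ℝ)⁻¹ * jinner X (jcross X X)

/-- The characteristic polynomial `Φ_X(t) = det (tE − X)`. -/
def charP (X : J1) (t : ℝ) : ℝ := jdet (t • jE - X)

/-- The quadratic form `Q(X) = −tr(X^{×2})`. -/
def Qform (X : J1) : ℝ := - jtr (jsq X)

/-- The diagonal matrix units. -/
def jE1 : J1 := jmk 1 0 0 0 0 0
def jE2 : J1 := jmk 0 1 0 0 0 0
def jE3 : J1 := jmk 0 0 1 0 0 0

/-- The off-diagonal elements `F¹ᵢ(x)`. -/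
def jF1 (x : Oct) : J1 := jmk 0 0 0 x 0 0
def jF2 (x : Oct) : J1 := jmk 0 0 0 0 x 0
def jF3 (x : Oct) : J1 := jmk 0 0 0 0 0 x

/-- `diag(a,b,c)`. -/
def jdiag (a b c : ℝ) : J1 := jmk a b c 0 0 0

/-- `P⁺ = h¹(1,−1,0;0,0,1)`. -/
def Pplus : J1 := jmk 1 (-1) 0 0 0 oone

/-- `P⁻ = h¹(−1,1,0;0,0,1)`. -/
def Pminus : J1 := jmk (-1) 1 0 0 0 oone

/-- `Q⁺(x) = h¹(0,0,0;x,x̄,0)`. -/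
def Qplus (x : Oct) : J1 := jmk 0 0 0 x (oconj x) 0
/-! ## The exceptional Lie group `F₄₍₋₂₀₎` -/

/-- `F₄₍₋₂₀₎`, the automorphism group of the exceptional Jordan algebra `J¹`:
`{g ∈ GL_ℝ(J¹) | g(X ∘ Y) = gX ∘ gY}`. -/
def F4 : Subgroup (J1 ≃ₗ[ℝ] J1) where
  carrier := {g | ∀ X Y : J1, g (jmul X Y) = jmul (g X) (g Y)}
  one_mem' := by
    intro X Y
    rfl
  mul_mem' := by
    intro a b ha hb
    have ha' : ∀ X Y : J1, a (jmul X Y) = jmul (a X) (a Y) := ha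
    have hb' : ∀ X Y : J1, b (jmul X Y) = jmul (b X) (b Y) := hb
    intro X Y
    simp only [le_mul_apply]
    rw [hb', ha']
  inv_mem' := by
    intro a ha
    have ha' : ∀ X Y : J1, a (jmul X Y) = jmul (a X) (a Y) := ha
    intro X Y
    apply a.injective
    rw [le_apply_inv_apply, ha', le_apply_inv_apply, le_apply_inv_apply]

/-- The (full) stabilizer subgroup of an element `v` inside `GL_ℝ(J¹)`;
`F4 ⊓ fixSubgroup v` is the stabilizer `(F₄₍₋₂₀₎)_v`, and intersections
`F4 ⊓ fixSubgroup v₁ ⊓ ⋯ ⊓ fixSubgroup vₙ` are pointwise stabilizers. -/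
def fixSubgroup (v : J1) : Subgroup (J1 ≃ₗ[ℝ] J1) where
  carrier := {g | g v = v}
  one_mem' := by
    show (1 : J1 ≃ₗ[ℝ] J1) v = v
    rfl
  mul_mem' := by
    intro a b ha hb
    have ha' : a v = v := ha
    have hb' : b v = v := hb
    show (a * b) v = v
    rw [le_mul_apply, hb', ha']
  inv_mem' := by
    intro a ha
    have ha' : a v = v := ha
    show a⁻¹ v = v
    conv_lhs => rw [← ha']
    rw [le_inv_apply_apply]

/-- The `F₄₍₋₂₀₎`-orbit of `v ∈ J¹`. -/
def orbF4 (v : J1) : Set J1 := {w | ∃ g ∈ F4, g v = w}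
/-! ## Triality: the groups `SO(8)`, `Spin(8) = D̃₄`, `Spin(7) = B̃₃` -/

theorem oconj_oconj (x : Oct) : oconj (oconj x) = x := by
  simp [oconj]

/-- `SO(8)` acting on the octonions: the inner-product preserving linear
automorphisms of determinant `1`. -/
def SO8 : Subgroup (Oct ≃ₗ[ℝ] Oct) where
  carrier := {g | (∀ x y : Oct, oinner (g x) (g y) = oinner x y) ∧ LinearEquiv.det g = 1}
  one_mem' := by
    refine ⟨fun x y => rfl, ?_⟩
    exact map_one LinearEquiv.det
  mul_mem' := by
    intro a b ha hb
    obtain ⟨ha1, ha2⟩ := ha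
    obtain ⟨hb1, hb2⟩ := hb
    refine ⟨fun x y => ?_, ?_⟩
    · rw [le_mul_apply, le_mul_apply, ha1, hb1]
    · rw [map_mul, ha2, hb2, one_mul]
  inv_mem' := by
    intro a ha
    obtain ⟨ha1, ha2⟩ := ha
    refine ⟨fun x y => ?_, ?_⟩
    · conv_rhs => rw [← le_apply_inv_apply a x, ← le_apply_inv_apply a y]
      rw [ha1]
    · rw [map_inv, ha2, inv_one]

/-- Triples of rotations of the octonions. -/
abbrev G3 : Type := (Oct ≃ₗ[ℝ] Oct) × (Oct ≃ₗ[ℝ] Oct) × (Oct ≃ₗ[ℝ] Oct)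

/-- The triality relation `(g₁x)(g₂y) = ε g₃ ε (xy)`, where `ε x = x̄`. -/
def trialityCond (g : G3) : Prop :=
  ∀ x y : Oct, omul (g.1 x) (g.2.1 y) = oconj (g.2.2 (oconj (omul x y)))

/-- `Spin(8)` realized as the triality group
`D̃₄ = {(g₁,g₂,g₃) ∈ SO(8)³ | (g₁x)(g₂y) = ε g₃ ε (xy) for all x,y}`. -/
def D4t : Subgroup G3 where
  carrier := {g | g.1 ∈ SO8 ∧ g.2.1 ∈ SO8 ∧ g.2.2 ∈ SO8 ∧ trialityCond g}
  one_mem' := by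
    refine ⟨SO8.one_mem, SO8.one_mem, SO8.one_mem, fun x y => ?_⟩
    show omul x y = oconj ((1 : Oct ≃ₗ[ℝ] Oct) (oconj (omul x y)))
    rw [le_one_apply, oconj_oconj]
  mul_mem' := by
    intro a b ha hb
    obtain ⟨ha1, ha2, ha3, ha4⟩ := ha
    obtain ⟨hb1, hb2, hb3, hb4⟩ := hb
    refine ⟨SO8.mul_mem ha1 hb1, SO8.mul_mem ha2 hb2, SO8.mul_mem ha3 hb3, fun x y => ?_⟩
    show omul ((a.1 * b.1) x) ((a.2.1 * b.2.1) y)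
        = oconj ((a.2.2 * b.2.2) (oconj (omul x y)))
    rw [le_mul_apply, le_mul_apply, le_mul_apply, ha4, hb4, oconj_oconj]
  inv_mem' := by
    intro a ha
    obtain ⟨ha1, ha2, ha3, ha4⟩ := ha
    refine ⟨SO8.inv_mem ha1, SO8.inv_mem ha2, SO8.inv_mem ha3, fun x y => ?_⟩
    show omul ((a.1)⁻¹ x) ((a.2.1)⁻¹ y) = oconj ((a.2.2)⁻¹ (oconj (omul x y)))
    have h := ha4 ((a.1)⁻¹ x) ((a.2.1)⁻¹ y)
    rw [le_apply_inv_apply, le_apply_inv_apply] at h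
    rw [h, oconj_oconj, le_inv_apply_apply, oconj_oconj]

/-- `Spin(7)` realized as the triality group `B̃₃ = {(g₁,g₂,g₃) ∈ D̃₄ | g₃ 1 = 1}`. -/
def B3t : Subgroup G3 where
  carrier := {g | g ∈ D4t ∧ g.2.2 oone = oone}
  one_mem' := by
    refine ⟨D4t.one_mem, ?_⟩
    rfl
  mul_mem' := by
    intro a b ha hb
    refine ⟨D4t.mul_mem ha.1 hb.1, ?_⟩
    show (a.2.2 * b.2.2) oone = oone
    rw [le_mul_apply, hb.2, ha.2]
  inv_mem' := by
    intro a ha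
    refine ⟨D4t.inv_mem ha.1, ?_⟩
    show (a.2.2)⁻¹ oone = oone
    conv_lhs => rw [← ha.2]
    rw [le_inv_apply_apply]
/-! ## The embedding `φ₀` and the involutions `σᵢ` -/

/-- `φ₀(g₁,g₂,g₃)` sends `Σ(ξᵢEᵢ + F¹ᵢ(xᵢ))` to `Σ(ξᵢEᵢ + F¹ᵢ(gᵢxᵢ))`. -/
def phi0 (g : G3) : J1 ≃ₗ[ℝ] J1 :=
  (LinearEquiv.refl ℝ (ℝ × ℝ × ℝ)).prodCongr (g.1.prodCongr (g.2.1.prodCongr g.2.2))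

/-- Negation of the octonions as a linear automorphism. -/
def negOct : Oct ≃ₗ[ℝ] Oct := LinearEquiv.neg ℝ

/-- `σ₁ = σ`: fixes the diagonal and the `F¹₁`-component, negates `F¹₂`, `F¹₃`. -/
def sigma1 : J1 ≃ₗ[ℝ] J1 := phi0 (1, negOct, negOct)

/-- `σ₂`: fixes the diagonal and the `F¹₂`-component, negates `F¹₁`, `F¹₃`. -/
def sigma2 : J1 ≃ₗ[ℝ] J1 := phi0 (negOct, 1, negOct)

/-- `σ₃`: fixes the diagonal and the `F¹₃`-component, negates `F¹₁`, `F¹₂`. -/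
def sigma3 : J1 ≃ₗ[ℝ] J1 := phi0 (negOct, negOct, 1)
theorem omul_zero_right (x : Oct) : omul x 0 = 0 := by
  simp [omul]

theorem omul_zero_left (x : Oct) : omul 0 x = 0 := by
  simp [omul]

theorem oconj_zero : oconj 0 = 0 := by simp [oconj]

theorem oinner_zero_left (x : Oct) : oinner 0 x = 0 := by simp [oinner, Quaternion.re_zero]
theorem oinner_zero_right (x : Oct) : oinner x 0 = 0 := by simp [oinner, Quaternion.re_zero]

theorem omul_oone_right (x : Oct) : omul x oone = x := by
  simp [omul, oone]

theorem omul_oone_left (x : Oct) : omul oone x = x := by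
  simp [omul, oone]

theorem oinner_oone_oone : oinner oone oone = 1 := by simp [oinner, oone, Quaternion.re_one, Quaternion.re_zero]

theorem sigma1_apply (X : J1) : sigma1 X = (X.1, (X.2.1, -X.2.2.1, -X.2.2.2)) := by
  simp [sigma1, phi0, negOct]

theorem sigma2_apply (X : J1) : sigma2 X = (X.1, (-X.2.1, X.2.2.1, -X.2.2.2)) := by
  simp [sigma2, phi0, negOct]

theorem sigma3_apply (X : J1) : sigma3 X = (X.1, (-X.2.1, -X.2.2.1, X.2.2.2)) := by
  simp [sigma3, phi0, negOct]

theorem jmul_jE1 (X : J1) : jmul jE1 X =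
    ((X.1.1, 0, 0), (0, (2:ℝ)⁻¹ • X.2.2.1, (2:ℝ)⁻¹ • X.2.2.2)) := by
  simp [jmul, jE1, jmk, ja1, ja2, ja3, jx1, jx2, jx3, omul_zero_right, omul_zero_left,
    oconj_zero, oinner_zero_left, oinner_zero_right]

theorem jmul_jE2 (X : J1) : jmul jE2 X =
    ((0, X.1.2.1, 0), ((2:ℝ)⁻¹ • X.2.1, 0, (2:ℝ)⁻¹ • X.2.2.2)) := by
  simp [jmul, jE2, jmk, ja1, ja2, ja3, jx1, jx2, jx3, omul_zero_right, omul_zero_left,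
    oconj_zero, oinner_zero_left, oinner_zero_right]

theorem jmul_jE3 (X : J1) : jmul jE3 X =
    ((0, 0, X.1.2.2), ((2:ℝ)⁻¹ • X.2.1, (2:ℝ)⁻¹ • X.2.2.1, 0)) := by
  simp [jmul, jE3, jmk, ja1, ja2, ja3, jx1, jx2, jx3, omul_zero_right, omul_zero_left,
    oconj_zero, oinner_zero_left, oinner_zero_right]

theorem eq_zero_of_self_eq_neg {M : Type*} [AddCommGroup M] [Module ℝ M]
    [NoZeroSMulDivisors ℝ M] {a : M} (h : a = -a) : a = 0 := by
  have h2 : (2:ℝ) • a = 0 := by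
    rw [two_smul]; nth_rewrite 1 [h]; simp
  rcases smul_eq_zero.mp h2 with h' | h'
  · norm_num at h'
  · exact h'

theorem anti1_comp {W : J1} (h : sigma1 W = -W) : W.1 = 0 ∧ W.2.1 = 0 := by
  rw [sigma1_apply] at h
  refine ⟨eq_zero_of_self_eq_neg ?_, eq_zero_of_self_eq_neg ?_⟩
  · exact congrArg Prod.fst h
  · exact congrArg (fun P => P.2.1) h

theorem fix1_comp {V : J1} (h : sigma1 V = V) : V.2.2.1 = 0 ∧ V.2.2.2 = 0 := by
  rw [sigma1_apply] at h
  constructor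
  · exact eq_zero_of_self_eq_neg (congrArg (fun P => P.2.2.1) h).symm
  · exact eq_zero_of_self_eq_neg (congrArg (fun P => P.2.2.2) h).symm

theorem anti2_comp {W : J1} (h : sigma2 W = -W) : W.1 = 0 ∧ W.2.2.1 = 0 := by
  rw [sigma2_apply] at h
  exact ⟨eq_zero_of_self_eq_neg (congrArg Prod.fst h),
    eq_zero_of_self_eq_neg (congrArg (fun P => P.2.2.1) h)⟩

theorem fix2_comp {V : J1} (h : sigma2 V = V) : V.2.1 = 0 ∧ V.2.2.2 = 0 := by
  rw [sigma2_apply] at h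
  exact ⟨eq_zero_of_self_eq_neg (congrArg (fun P => P.2.1) h).symm,
    eq_zero_of_self_eq_neg (congrArg (fun P => P.2.2.2) h).symm⟩

theorem anti3_comp {W : J1} (h : sigma3 W = -W) : W.1 = 0 ∧ W.2.2.2 = 0 := by
  rw [sigma3_apply] at h
  exact ⟨eq_zero_of_self_eq_neg (congrArg Prod.fst h),
    eq_zero_of_self_eq_neg (congrArg (fun P => P.2.2.2) h)⟩

theorem fix3_comp {V : J1} (h : sigma3 V = V) : V.2.1 = 0 ∧ V.2.2.1 = 0 := by
  rw [sigma3_apply] at h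
  exact ⟨eq_zero_of_self_eq_neg (congrArg (fun P => P.2.1) h).symm,
    eq_zero_of_self_eq_neg (congrArg (fun P => P.2.2.1) h).symm⟩

theorem sigma1_eq (X : J1) :
    sigma1 X = X - (8:ℝ) • jmul jE1 X + (8:ℝ) • jmul jE1 (jmul jE1 X) := by
  rw [sigma1_apply, jmul_jE1, jmul_jE1]
  simp [Prod.ext_iff]
  norm_num [smul_smul, two_smul]
  constructor <;> exact ⟨by module, by module⟩

theorem sigma2_eq (X : J1) :
    sigma2 X = X - (8:ℝ) • jmul jE2 X + (8:ℝ) • jmul jE2 (jmul jE2 X) := by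
  rw [sigma2_apply, jmul_jE2, jmul_jE2]
  simp [Prod.ext_iff]
  norm_num [smul_smul, two_smul]
  constructor <;> exact ⟨by module, by module⟩

theorem sigma3_eq (X : J1) :
    sigma3 X = X - (8:ℝ) • jmul jE3 X + (8:ℝ) • jmul jE3 (jmul jE3 X) := by
  rw [sigma3_apply, jmul_jE3, jmul_jE3]
  simp [Prod.ext_iff]
  norm_num [smul_smul, two_smul]
  constructor <;> exact ⟨by module, by module⟩

theorem half1 {W : J1} (h : sigma1 W = -W) : jmul jE1 W = (2:ℝ)⁻¹ • W := by
  obtain ⟨h1, h2⟩ := anti1_comp h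
  simp [jmul_jE1, Prod.ext_iff, h1, h2]

theorem half2 {W : J1} (h : sigma2 W = -W) : jmul jE2 W = (2:ℝ)⁻¹ • W := by
  obtain ⟨h1, h2⟩ := anti2_comp h
  simp [jmul_jE2, Prod.ext_iff, h1, h2]

theorem half3 {W : J1} (h : sigma3 W = -W) : jmul jE3 W = (2:ℝ)⁻¹ • W := by
  obtain ⟨h1, h2⟩ := anti3_comp h
  simp [jmul_jE3, Prod.ext_iff, h1, h2]

theorem fix1 {V : J1} (h : sigma1 V = V) : jmul jE1 V = ja1 V • jE1 := by
  obtain ⟨h1, h2⟩ := fix1_comp h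
  rw [jmul_jE1, h1, h2]
  simp [jE1, jmk, ja1, Prod.ext_iff]

theorem fix2 {V : J1} (h : sigma2 V = V) : jmul jE2 V = ja2 V • jE2 := by
  obtain ⟨h1, h2⟩ := fix2_comp h
  rw [jmul_jE2, h1, h2]
  simp [jE2, jmk, ja2, Prod.ext_iff]

theorem fix3 {V : J1} (h : sigma3 V = V) : jmul jE3 V = ja3 V • jE3 := by
  obtain ⟨h1, h2⟩ := fix3_comp h
  rw [jmul_jE3, h1, h2]
  simp [jE3, jmk, ja3, Prod.ext_iff]

theorem anti1_sq {W : J1} (h : sigma1 W = -W) : sigma1 (jmul W W) = jmul W W := by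
  obtain ⟨h1, h2⟩ := anti1_comp h
  rw [sigma1_apply]
  simp [jmul, jmk, ja1, ja2, ja3, jx1, jx2, jx3, h1, h2, Prod.ext_iff,
    omul_zero_left, omul_zero_right, oconj_zero]

theorem anti2_sq {W : J1} (h : sigma2 W = -W) : sigma2 (jmul W W) = jmul W W := by
  obtain ⟨h1, h2⟩ := anti2_comp h
  rw [sigma2_apply]
  simp [jmul, jmk, ja1, ja2, ja3, jx1, jx2, jx3, h1, h2, Prod.ext_iff,
    omul_zero_left, omul_zero_right, oconj_zero]

theorem anti3_sq {W : J1} (h : sigma3 W = -W) : sigma3 (jmul W W) = jmul W W := by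
  obtain ⟨h1, h2⟩ := anti3_comp h
  rw [sigma3_apply]
  simp [jmul, jmk, ja1, ja2, ja3, jx1, jx2, jx3, h1, h2, Prod.ext_iff,
    omul_zero_left, omul_zero_right, oconj_zero]

theorem oconj_eq_zero {x : Oct} (h : oconj x = 0) : x = 0 := by
  have := congrArg oconj h
  rwa [oconj_oconj, oconj_zero] at this

theorem smul_oone_cancel {s t : ℝ} (h : s • oone = t • oone) : s = t := by
  have := congrArg (fun w : Oct => w.1.re) h
  simpa [oone, Quaternion.re_one] using this

set_option maxHeartbeats 1000000 in
theorem mul1F2 (a b c : ℝ) (x : Oct) :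
    jmul ((a,b,c),(x,0,0)) (jF2 oone) =
      ((0,0,0),(0, ((2:ℝ)⁻¹*(c+a))•oone, (2:ℝ)⁻¹ • oconj x)) := by
  simp [jmul, jmk, ja1, ja2, ja3, jx1, jx2, jx3, jF2, omul_oone_right, omul_oone_left,
    omul_zero_left, omul_zero_right, oconj_zero, oinner_zero_left, oinner_zero_right,
    smul_smul, Prod.ext_iff]

set_option maxHeartbeats 1000000 in
theorem mul1F3 (a b c : ℝ) (x : Oct) :
    jmul ((a,b,c),(x,0,0)) (jF3 oone) =
      ((0,0,0),(0, (2:ℝ)⁻¹ • oconj x, ((2:ℝ)⁻¹*(a+b))•oone)) := by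
  simp [jmul, jmk, ja1, ja2, ja3, jx1, jx2, jx3, jF3, omul_oone_right, omul_oone_left,
    omul_zero_left, omul_zero_right, oconj_zero, oinner_zero_left, oinner_zero_right,
    smul_smul, Prod.ext_iff]

set_option maxHeartbeats 1000000 in
theorem mulF3F3 : jmul (jF3 oone) (jF3 oone) = (((-1:ℝ),(-1:ℝ),(0:ℝ)),((0:Oct),(0:Oct),(0:Oct))) := by
  simp [jmul, jmk, ja1, ja2, ja3, jx1, jx2, jx3, jF3, omul_oone_right, omul_oone_left,
    omul_zero_left, omul_zero_right, oconj_zero, oinner_zero_left, oinner_zero_right,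
    oinner_oone_oone, Prod.ext_iff]

set_option maxHeartbeats 1000000 in
theorem mulF1F1 : jmul (jF1 oone) (jF1 oone) = (((0:ℝ),(1:ℝ),(1:ℝ)),((0:Oct),(0:Oct),(0:Oct))) := by
  simp [jmul, jmk, ja1, ja2, ja3, jx1, jx2, jx3, jF1, omul_oone_right, omul_oone_left,
    omul_zero_left, omul_zero_right, oconj_zero, oinner_zero_left, oinner_zero_right,
    oinner_oone_oone, Prod.ext_iff]

set_option maxHeartbeats 1000000 in
theorem mul1diag (a b c : ℝ) (x : Oct) :
    jmul ((a,b,c),(x,0,0)) (((-1:ℝ),(-1:ℝ),(0:ℝ)),((0:Oct),(0:Oct),(0:Oct))) =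
      ((-a,-b,0),((-(2:ℝ)⁻¹) • x,0,0)) := by
  simp [jmul, jmk, ja1, ja2, ja3, jx1, jx2, jx3, omul_oone_right, omul_oone_left,
    omul_zero_left, omul_zero_right, oconj_zero, oinner_zero_left, oinner_zero_right,
    smul_smul, Prod.ext_iff]

set_option maxHeartbeats 1000000 in
theorem mul2F1 (a b c : ℝ) (x : Oct) :
    jmul ((a,b,c),(0,x,0)) (jF1 oone) =
      ((0,0,0),(((2:ℝ)⁻¹*(b+c))•oone, 0, (2:ℝ)⁻¹ • oconj x)) := by
  simp [jmul, jmk, ja1, ja2, ja3, jx1, jx2, jx3, jF1, omul_oone_right, omul_oone_left,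
    omul_zero_left, omul_zero_right, oconj_zero, oinner_zero_left, oinner_zero_right,
    smul_smul, Prod.ext_iff]

set_option maxHeartbeats 1000000 in
theorem mul2F3 (a b c : ℝ) (x : Oct) :
    jmul ((a,b,c),(0,x,0)) (jF3 oone) =
      ((0,0,0),((-(2:ℝ)⁻¹) • oconj x, 0, ((2:ℝ)⁻¹*(a+b))•oone)) := by
  simp [jmul, jmk, ja1, ja2, ja3, jx1, jx2, jx3, jF3, omul_oone_right, omul_oone_left,
    omul_zero_left, omul_zero_right, oconj_zero, oinner_zero_left, oinner_zero_right,
    smul_smul, Prod.ext_iff]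

set_option maxHeartbeats 1000000 in
theorem mul2diag (a b c : ℝ) (x : Oct) :
    jmul ((a,b,c),(0,x,0)) (((-1:ℝ),(-1:ℝ),(0:ℝ)),((0:Oct),(0:Oct),(0:Oct))) =
      ((-a,-b,0),(0,(-(2:ℝ)⁻¹) • x,0)) := by
  simp [jmul, jmk, ja1, ja2, ja3, jx1, jx2, jx3, omul_oone_right, omul_oone_left,
    omul_zero_left, omul_zero_right, oconj_zero, oinner_zero_left, oinner_zero_right,
    smul_smul, Prod.ext_iff]

set_option maxHeartbeats 1000000 in
theorem mul3F1 (a b c : ℝ) (x : Oct) :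
    jmul ((a,b,c),(0,0,x)) (jF1 oone) =
      ((0,0,0),(((2:ℝ)⁻¹*(b+c))•oone, (2:ℝ)⁻¹ • oconj x, 0)) := by
  simp [jmul, jmk, ja1, ja2, ja3, jx1, jx2, jx3, jF1, omul_oone_right, omul_oone_left,
    omul_zero_left, omul_zero_right, oconj_zero, oinner_zero_left, oinner_zero_right,
    smul_smul, Prod.ext_iff]

set_option maxHeartbeats 1000000 in
theorem mul3F2 (a b c : ℝ) (x : Oct) :
    jmul ((a,b,c),(0,0,x)) (jF2 oone) =
      ((0,0,0),((-(2:ℝ)⁻¹) • oconj x, ((2:ℝ)⁻¹*(c+a))•oone, 0)) := by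
  simp [jmul, jmk, ja1, ja2, ja3, jx1, jx2, jx3, jF2, omul_oone_right, omul_oone_left,
    omul_zero_left, omul_zero_right, oconj_zero, oinner_zero_left, oinner_zero_right,
    smul_smul, Prod.ext_iff]

set_option maxHeartbeats 1000000 in
theorem mul3diag (a b c : ℝ) (x : Oct) :
    jmul ((a,b,c),(0,0,x)) (((0:ℝ),(1:ℝ),(1:ℝ)),((0:Oct),(0:Oct),(0:Oct))) =
      ((0,b,c),(0,0,(2:ℝ)⁻¹ • x)) := by
  simp [jmul, jmk, ja1, ja2, ja3, jx1, jx2, jx3, omul_oone_right, omul_oone_left,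
    omul_zero_left, omul_zero_right, oconj_zero, oinner_zero_left, oinner_zero_right,
    smul_smul, Prod.ext_iff]

theorem smul_jF1 (s : ℝ) : s • jF1 oone = (((0:ℝ),(0:ℝ),(0:ℝ)),(s•oone,(0:Oct),(0:Oct))) := by
  simp [jF1, jmk, Prod.ext_iff]
theorem smul_jF2 (s : ℝ) : s • jF2 oone = (((0:ℝ),(0:ℝ),(0:ℝ)),((0:Oct),s•oone,(0:Oct))) := by
  simp [jF2, jmk, Prod.ext_iff]
theorem smul_jF3 (s : ℝ) : s • jF3 oone = (((0:ℝ),(0:ℝ),(0:ℝ)),((0:Oct),(0:Oct),s•oone)) := by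
  simp [jF3, jmk, Prod.ext_iff]
theorem smul_diagJ (lam a b c : ℝ) (x y z : Oct) :
    lam • (((a,b,c),(x,y,z)) : J1) = ((lam*a, lam*b, lam*c),(lam•x,lam•y,lam•z)) := by
  simp [Prod.ext_iff, smul_eq_mul]

theorem ocancel {x : Oct} (h : (2:ℝ)⁻¹ • oconj x = (0:Oct)) : x = 0 := by
  apply oconj_eq_zero
  have h2 : (2:ℝ)⁻¹ • oconj x = (2:ℝ)⁻¹ • (0:Oct) := by rwa [smul_zero]
  exact smul_right_injective Oct (by norm_num) h2

theorem ocancel' {x : Oct} (h : -(2:ℝ)⁻¹ • oconj x = (0:Oct)) : x = 0 := by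
  apply oconj_eq_zero
  have h2 : -(2:ℝ)⁻¹ • oconj x = -(2:ℝ)⁻¹ • (0:Oct) := by rwa [smul_zero]
  exact smul_right_injective Oct (by norm_num) h2

theorem scancel {s : ℝ} (h : ((2:ℝ)⁻¹*s)•oone = (2:ℝ)⁻¹•oone) : s = 1 := by
  have := smul_oone_cancel h
  linarith

theorem unique1 {A : J1} (hfix : sigma1 A = A)
    (h2 : jmul A (jF2 oone) = (2:ℝ)⁻¹ • jF2 oone)
    (h3 : jmul A (jF3 oone) = (2:ℝ)⁻¹ • jF3 oone)
    {lam : ℝ}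
    (h0 : jmul A ((((-1:ℝ),(-1:ℝ),(0:ℝ)),((0:Oct),(0:Oct),(0:Oct))) : J1) = lam • A) :
    A = jE1 := by
  obtain ⟨⟨a,b,c⟩, x, y, z⟩ := A
  have hy : y = 0 := (fix1_comp hfix).1
  have hz : z = 0 := (fix1_comp hfix).2
  subst hy hz
  rw [mul1F2, smul_jF2] at h2
  rw [mul1F3, smul_jF3] at h3
  simp only [Prod.mk.injEq] at h2 h3
  have hca : c + a = 1 := scancel h2.2.2.1
  have hx : x = 0 := ocancel h2.2.2.2
  have hab : a + b = 1 := scancel h3.2.2.2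
  subst hx
  rw [mul1diag, smul_diagJ] at h0
  simp only [Prod.mk.injEq, smul_zero] at h0
  have e5 : -b = lam * b := h0.1.2.1
  have e6 : (0:ℝ) = lam * c := h0.1.2.2
  have hbc : b = c := by linarith
  have hc : c = 0 := by
    rw [hbc] at e5
    linarith
  have hb : b = 0 := by rw [hbc, hc]
  have ha : a = 1 := by linarith
  simp [jE1, jmk, Prod.ext_iff, ha, hb, hc]

theorem unique2 {A : J1} (hfix : sigma2 A = A)
    (h1 : jmul A (jF1 oone) = (2:ℝ)⁻¹ • jF1 oone)
    (h3 : jmul A (jF3 oone) = (2:ℝ)⁻¹ • jF3 oone)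
    {lam : ℝ}
    (h0 : jmul A ((((-1:ℝ),(-1:ℝ),(0:ℝ)),((0:Oct),(0:Oct),(0:Oct))) : J1) = lam • A) :
    A = jE2 := by
  obtain ⟨⟨a,b,c⟩, x, y, z⟩ := A
  have hx : x = 0 := (fix2_comp hfix).1
  have hz : z = 0 := (fix2_comp hfix).2
  subst hx hz
  rw [mul2F1, smul_jF1] at h1
  rw [mul2F3, smul_jF3] at h3
  simp only [Prod.mk.injEq] at h1 h3
  have hbc : b + c = 1 := scancel h1.2.1
  have hy : y = 0 := ocancel h1.2.2.2
  have hab : a + b = 1 := scancel h3.2.2.2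
  subst hy
  rw [mul2diag, smul_diagJ] at h0
  simp only [Prod.mk.injEq, smul_zero] at h0
  have e5 : -a = lam * a := h0.1.1
  have e6 : (0:ℝ) = lam * c := h0.1.2.2
  have hac : a = c := by linarith
  have ha : a = 0 := by
    rw [hac] at e5
    linarith
  have hc : c = 0 := by rw [← hac, ha]
  have hb : b = 1 := by linarith
  simp [jE2, jmk, Prod.ext_iff, ha, hb, hc]

theorem unique3 {A : J1} (hfix : sigma3 A = A)
    (h1 : jmul A (jF1 oone) = (2:ℝ)⁻¹ • jF1 oone)
    (h2 : jmul A (jF2 oone) = (2:ℝ)⁻¹ • jF2 oone)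
    {lam : ℝ}
    (h0 : jmul A ((((0:ℝ),(1:ℝ),(1:ℝ)),((0:Oct),(0:Oct),(0:Oct))) : J1) = lam • A) :
    A = jE3 := by
  obtain ⟨⟨a,b,c⟩, x, y, z⟩ := A
  have hx : x = 0 := (fix3_comp hfix).1
  have hy : y = 0 := (fix3_comp hfix).2
  subst hx hy
  rw [mul3F1, smul_jF1] at h1
  rw [mul3F2, smul_jF2] at h2
  simp only [Prod.mk.injEq] at h1 h2
  have hbc : b + c = 1 := scancel h1.2.1
  have hz : z = 0 := ocancel h1.2.2.1
  have hca : c + a = 1 := scancel h2.2.2.1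
  subst hz
  rw [mul3diag, smul_diagJ] at h0
  simp only [Prod.mk.injEq, smul_zero] at h0
  have e5 : (0:ℝ) = lam * a := h0.1.1
  have e6 : b = lam * b := h0.1.2.1
  have hba : b = a := by linarith
  have hb : b = 0 := by
    rw [hba] at e6
    linarith
  have ha : a = 0 := by rw [← hba, hb]
  have hc : c = 1 := by linarith
  simp [jE3, jmk, Prod.ext_iff, ha, hb, hc]

theorem sigma1_jE1 : sigma1 jE1 = jE1 := by
  simp [sigma1_apply, jE1, jmk, Prod.ext_iff]
theorem sigma2_jE2 : sigma2 jE2 = jE2 := by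
  simp [sigma2_apply, jE2, jmk, Prod.ext_iff]
theorem sigma3_jE3 : sigma3 jE3 = jE3 := by
  simp [sigma3_apply, jE3, jmk, Prod.ext_iff]

theorem antiF2_1 : sigma1 (jF2 oone) = -(jF2 oone) := by
  simp [sigma1_apply, jF2, jmk, Prod.ext_iff]
theorem antiF3_1 : sigma1 (jF3 oone) = -(jF3 oone) := by
  simp [sigma1_apply, jF3, jmk, Prod.ext_iff]
theorem antiF1_2 : sigma2 (jF1 oone) = -(jF1 oone) := by
  simp [sigma2_apply, jF1, jmk, Prod.ext_iff]
theorem antiF3_2 : sigma2 (jF3 oone) = -(jF3 oone) := by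
  simp [sigma2_apply, jF3, jmk, Prod.ext_iff]
theorem antiF1_3 : sigma3 (jF1 oone) = -(jF1 oone) := by
  simp [sigma3_apply, jF1, jmk, Prod.ext_iff]
theorem antiF2_3 : sigma3 (jF2 oone) = -(jF2 oone) := by
  simp [sigma3_apply, jF2, jmk, Prod.ext_iff]

theorem key1 {g : J1 ≃ₗ[ℝ] J1} (hg : g ∈ F4) :
    sigma1 * g = g * sigma1 ↔ g jE1 = jE1 := by
  have hg' : ∀ X Y, g (jmul X Y) = jmul (g X) (g Y) := hg
  constructor
  · intro hc
    have hcinv : sigma1 * g⁻¹ = g⁻¹ * sigma1 := by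
      calc sigma1 * g⁻¹ = g⁻¹ * (g * sigma1) * g⁻¹ := by group
        _ = g⁻¹ * (sigma1 * g) * g⁻¹ := by rw [hc]
        _ = g⁻¹ * sigma1 := by group
    have happ : ∀ Z, sigma1 (g Z) = g (sigma1 Z) := by
      intro Z
      have h := congrArg (fun f : J1 ≃ₗ[ℝ] J1 => f Z) hc
      simpa only [le_mul_apply] using h
    have happinv : ∀ Z, sigma1 (g⁻¹ Z) = g⁻¹ (sigma1 Z) := by
      intro Z
      have h := congrArg (fun f : J1 ≃ₗ[ℝ] J1 => f Z) hcinv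
      simpa only [le_mul_apply] using h
    have hfixA : sigma1 (g jE1) = g jE1 := by rw [happ, sigma1_jE1]
    have hanti : ∀ Z : J1, sigma1 Z = -Z → sigma1 (g⁻¹ Z) = -(g⁻¹ Z) := by
      intro Z hZ; rw [happinv, hZ, map_neg]
    have hhalf : ∀ Z : J1, sigma1 Z = -Z → jmul (g jE1) Z = (2:ℝ)⁻¹ • Z := by
      intro Z hZ
      calc jmul (g jE1) Z = jmul (g jE1) (g (g⁻¹ Z)) := by rw [le_apply_inv_apply]
        _ = g (jmul jE1 (g⁻¹ Z)) := (hg' _ _).symm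
        _ = g ((2:ℝ)⁻¹ • (g⁻¹ Z)) := by rw [half1 (hanti Z hZ)]
        _ = (2:ℝ)⁻¹ • Z := by rw [map_smul, le_apply_inv_apply]
    have hlam : ∀ Z : J1, sigma1 Z = -Z →
        ∃ lam : ℝ, jmul (g jE1) (jmul Z Z) = lam • (g jE1) := by
      intro Z hZ
      refine ⟨ja1 (jmul (g⁻¹ Z) (g⁻¹ Z)), ?_⟩
      calc jmul (g jE1) (jmul Z Z)
          = jmul (g jE1) (jmul (g (g⁻¹ Z)) (g (g⁻¹ Z))) := by rw [le_apply_inv_apply]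
        _ = jmul (g jE1) (g (jmul (g⁻¹ Z) (g⁻¹ Z))) := by rw [hg']
        _ = g (jmul jE1 (jmul (g⁻¹ Z) (g⁻¹ Z))) := (hg' _ _).symm
        _ = g (ja1 (jmul (g⁻¹ Z) (g⁻¹ Z)) • jE1) := by rw [fix1 (anti1_sq (hanti Z hZ))]
        _ = _ := by rw [map_smul]
    obtain ⟨lam, h0⟩ := hlam _ antiF3_1
    rw [mulF3F3] at h0
    exact unique1 hfixA (hhalf _ antiF2_1) (hhalf _ antiF3_1) h0
  · intro hfixE
    refine LinearEquiv.ext fun X => ?_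
    have k1 : g (jmul jE1 X) = jmul jE1 (g X) := by rw [hg', hfixE]
    have k2 : g (jmul jE1 (jmul jE1 X)) = jmul jE1 (jmul jE1 (g X)) := by
      rw [hg', hfixE, k1]
    show sigma1 (g X) = g (sigma1 X)
    rw [sigma1_eq (g X), sigma1_eq X, map_add, map_sub, map_smul, map_smul, k1, k2]

theorem key2 {g : J1 ≃ₗ[ℝ] J1} (hg : g ∈ F4) :
    sigma2 * g = g * sigma2 ↔ g jE2 = jE2 := by
  have hg' : ∀ X Y, g (jmul X Y) = jmul (g X) (g Y) := hg
  constructor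
  · intro hc
    have hcinv : sigma2 * g⁻¹ = g⁻¹ * sigma2 := by
      calc sigma2 * g⁻¹ = g⁻¹ * (g * sigma2) * g⁻¹ := by group
        _ = g⁻¹ * (sigma2 * g) * g⁻¹ := by rw [hc]
        _ = g⁻¹ * sigma2 := by group
    have happ : ∀ Z, sigma2 (g Z) = g (sigma2 Z) := by
      intro Z
      have h := congrArg (fun f : J1 ≃ₗ[ℝ] J1 => f Z) hc
      simpa only [le_mul_apply] using h
    have happinv : ∀ Z, sigma2 (g⁻¹ Z) = g⁻¹ (sigma2 Z) := by
      intro Z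
      have h := congrArg (fun f : J1 ≃ₗ[ℝ] J1 => f Z) hcinv
      simpa only [le_mul_apply] using h
    have hfixA : sigma2 (g jE2) = g jE2 := by rw [happ, sigma2_jE2]
    have hanti : ∀ Z : J1, sigma2 Z = -Z → sigma2 (g⁻¹ Z) = -(g⁻¹ Z) := by
      intro Z hZ; rw [happinv, hZ, map_neg]
    have hhalf : ∀ Z : J1, sigma2 Z = -Z → jmul (g jE2) Z = (2:ℝ)⁻¹ • Z := by
      intro Z hZ
      calc jmul (g jE2) Z = jmul (g jE2) (g (g⁻¹ Z)) := by rw [le_apply_inv_apply]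
        _ = g (jmul jE2 (g⁻¹ Z)) := (hg' _ _).symm
        _ = g ((2:ℝ)⁻¹ • (g⁻¹ Z)) := by rw [half2 (hanti Z hZ)]
        _ = (2:ℝ)⁻¹ • Z := by rw [map_smul, le_apply_inv_apply]
    have hlam : ∀ Z : J1, sigma2 Z = -Z →
        ∃ lam : ℝ, jmul (g jE2) (jmul Z Z) = lam • (g jE2) := by
      intro Z hZ
      refine ⟨ja2 (jmul (g⁻¹ Z) (g⁻¹ Z)), ?_⟩
      calc jmul (g jE2) (jmul Z Z)
          = jmul (g jE2) (jmul (g (g⁻¹ Z)) (g (g⁻¹ Z))) := by rw [le_apply_inv_apply]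
        _ = jmul (g jE2) (g (jmul (g⁻¹ Z) (g⁻¹ Z))) := by rw [hg']
        _ = g (jmul jE2 (jmul (g⁻¹ Z) (g⁻¹ Z))) := (hg' _ _).symm
        _ = g (ja2 (jmul (g⁻¹ Z) (g⁻¹ Z)) • jE2) := by rw [fix2 (anti2_sq (hanti Z hZ))]
        _ = _ := by rw [map_smul]
    obtain ⟨lam, h0⟩ := hlam _ antiF3_2
    rw [mulF3F3] at h0
    exact unique2 hfixA (hhalf _ antiF1_2) (hhalf _ antiF3_2) h0
  · intro hfixE
    refine LinearEquiv.ext fun X => ?_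
    have k1 : g (jmul jE2 X) = jmul jE2 (g X) := by rw [hg', hfixE]
    have k2 : g (jmul jE2 (jmul jE2 X)) = jmul jE2 (jmul jE2 (g X)) := by
      rw [hg', hfixE, k1]
    show sigma2 (g X) = g (sigma2 X)
    rw [sigma2_eq (g X), sigma2_eq X, map_add, map_sub, map_smul, map_smul, k1, k2]

theorem key3 {g : J1 ≃ₗ[ℝ] J1} (hg : g ∈ F4) :
    sigma3 * g = g * sigma3 ↔ g jE3 = jE3 := by
  have hg' : ∀ X Y, g (jmul X Y) = jmul (g X) (g Y) := hg
  constructor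
  · intro hc
    have hcinv : sigma3 * g⁻¹ = g⁻¹ * sigma3 := by
      calc sigma3 * g⁻¹ = g⁻¹ * (g * sigma3) * g⁻¹ := by group
        _ = g⁻¹ * (sigma3 * g) * g⁻¹ := by rw [hc]
        _ = g⁻¹ * sigma3 := by group
    have happ : ∀ Z, sigma3 (g Z) = g (sigma3 Z) := by
      intro Z
      have h := congrArg (fun f : J1 ≃ₗ[ℝ] J1 => f Z) hc
      simpa only [le_mul_apply] using h
    have happinv : ∀ Z, sigma3 (g⁻¹ Z) = g⁻¹ (sigma3 Z) := by
      intro Z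
      have h := congrArg (fun f : J1 ≃ₗ[ℝ] J1 => f Z) hcinv
      simpa only [le_mul_apply] using h
    have hfixA : sigma3 (g jE3) = g jE3 := by rw [happ, sigma3_jE3]
    have hanti : ∀ Z : J1, sigma3 Z = -Z → sigma3 (g⁻¹ Z) = -(g⁻¹ Z) := by
      intro Z hZ; rw [happinv, hZ, map_neg]
    have hhalf : ∀ Z : J1, sigma3 Z = -Z → jmul (g jE3) Z = (2:ℝ)⁻¹ • Z := by
      intro Z hZ
      calc jmul (g jE3) Z = jmul (g jE3) (g (g⁻¹ Z)) := by rw [le_apply_inv_apply]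
        _ = g (jmul jE3 (g⁻¹ Z)) := (hg' _ _).symm
        _ = g ((2:ℝ)⁻¹ • (g⁻¹ Z)) := by rw [half3 (hanti Z hZ)]
        _ = (2:ℝ)⁻¹ • Z := by rw [map_smul, le_apply_inv_apply]
    have hlam : ∀ Z : J1, sigma3 Z = -Z →
        ∃ lam : ℝ, jmul (g jE3) (jmul Z Z) = lam • (g jE3) := by
      intro Z hZ
      refine ⟨ja3 (jmul (g⁻¹ Z) (g⁻¹ Z)), ?_⟩
      calc jmul (g jE3) (jmul Z Z)
          = jmul (g jE3) (jmul (g (g⁻¹ Z)) (g (g⁻¹ Z))) := by rw [le_apply_inv_apply]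
        _ = jmul (g jE3) (g (jmul (g⁻¹ Z) (g⁻¹ Z))) := by rw [hg']
        _ = g (jmul jE3 (jmul (g⁻¹ Z) (g⁻¹ Z))) := (hg' _ _).symm
        _ = g (ja3 (jmul (g⁻¹ Z) (g⁻¹ Z)) • jE3) := by rw [fix3 (anti3_sq (hanti Z hZ))]
        _ = _ := by rw [map_smul]
    obtain ⟨lam, h0⟩ := hlam _ antiF1_3
    rw [mulF1F1] at h0
    exact unique3 hfixA (hhalf _ antiF1_3) (hhalf _ antiF2_3) h0
  · intro hfixE
    refine LinearEquiv.ext fun X => ?_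
    have k1 : g (jmul jE3 X) = jmul jE3 (g X) := by rw [hg', hfixE]
    have k2 : g (jmul jE3 (jmul jE3 X)) = jmul jE3 (jmul jE3 (g X)) := by
      rw [hg', hfixE, k1]
    show sigma3 (g X) = g (sigma3 X)
    rw [sigma3_eq (g X), sigma3_eq X, map_add, map_sub, map_smul, map_smul, k1, k2]

theorem oconj_omul (x y : Oct) : oconj (omul x y) = omul (oconj y) (oconj x) := by
  simp only [oconj, omul, Prod.ext_iff, star_sub, star_mul, star_star, star_neg, neg_neg,
    neg_add, neg_mul, mul_neg]
  exact ⟨trivial, by abel⟩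

theorem omul_oconj_oconj (u v : Oct) : omul (oconj u) (oconj v) = oconj (omul v u) :=
  (oconj_omul v u).symm

theorem oinner_oconj (x y : Oct) : oinner (oconj x) (oconj y) = oinner x y := by
  simp [oconj, oinner, Quaternion.re_mul, Quaternion.re_star, Quaternion.imI_star,
    Quaternion.imJ_star, Quaternion.imK_star]
  try ring

theorem oconj_add (x y : Oct) : oconj (x + y) = oconj x + oconj y := by
  simp [oconj, Prod.ext_iff, star_add]
  abel

theorem oconj_sub (x y : Oct) : oconj (x - y) = oconj x - oconj y := by
  simp [oconj, Prod.ext_iff, star_sub]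
  abel

theorem oconj_smul (c : ℝ) (x : Oct) : oconj (c • x) = c • oconj x := by
  simp [oconj, Prod.ext_iff, star_smul]

theorem oconj_neg (x : Oct) : oconj (-x) = - oconj x := by
  simp [oconj, Prod.ext_iff]

def oconjL : Oct ≃ₗ[ℝ] Oct where
  toFun := oconj
  invFun := oconj
  left_inv := oconj_oconj
  right_inv := oconj_oconj
  map_add' := oconj_add
  map_smul' := oconj_smul

def tauJ : J1 ≃ₗ[ℝ] J1 :=
  ((LinearEquiv.refl ℝ ℝ).prodCongr (LinearEquiv.prodComm ℝ ℝ ℝ)).prodCongr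
    (oconjL.prodCongr ((LinearEquiv.prodComm ℝ Oct Oct).trans (oconjL.prodCongr oconjL)))

theorem tauJ_apply (X : J1) : tauJ X =
    ((X.1.1, X.1.2.2, X.1.2.1), (oconj X.2.1, oconj X.2.2.2, oconj X.2.2.1)) := by
  simp [tauJ, oconjL]
  rfl

theorem tauJ_tauJ (X : J1) : tauJ (tauJ X) = X := by
  simp [tauJ_apply, oconj_oconj]

theorem tauJ_sq : tauJ * tauJ = 1 := by
  refine LinearEquiv.ext fun X => ?_
  show tauJ (tauJ X) = X
  exact tauJ_tauJ X

theorem tauJ_jE2 : tauJ jE2 = jE3 := by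
  simp [tauJ_apply, jE2, jE3, jmk, Prod.ext_iff, oconj_zero]

theorem tauJ_jE3 : tauJ jE3 = jE2 := by
  simp [tauJ_apply, jE2, jE3, jmk, Prod.ext_iff, oconj_zero]

theorem proj1_of_eq {A B : Oct} (h : A = B) : A.1 = B.1 := congrArg Prod.fst h
theorem proj2_of_eq {A B : Oct} (h : A = B) : A.2 = B.2 := congrArg Prod.snd h

set_option maxHeartbeats 2000000 in
theorem tauJ_jmul (X Y : J1) : tauJ (jmul X Y) = jmul (tauJ X) (tauJ Y) := by
  rw [tauJ_apply, tauJ_apply]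
  simp only [jmul, jmk, ja1, ja2, ja3, jx1, jx2, jx3, tauJ_apply,
    oconj_add, oconj_sub, oconj_smul, oconj_neg, oconj_oconj, omul_oconj_oconj,
    oinner_oconj, Prod.ext_iff, smul_add, smul_sub, smul_neg]
  repeat' apply And.intro
  all_goals first
    | trivial
    | ring1
    | (apply proj1_of_eq; module)
    | (apply proj2_of_eq; module)

theorem tau_conj_memF4 {g : J1 ≃ₗ[ℝ] J1} (hg : g ∈ F4) : tauJ * g * tauJ ∈ F4 := by
  have hg' : ∀ X Y, g (jmul X Y) = jmul (g X) (g Y) := hg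
  intro X Y
  show (tauJ * g * tauJ) (jmul X Y) = jmul ((tauJ * g * tauJ) X) ((tauJ * g * tauJ) Y)
  simp only [le_mul_apply]
  rw [tauJ_jmul, hg', tauJ_jmul]

theorem tau_tau_conj (g : J1 ≃ₗ[ℝ] J1) : tauJ * (tauJ * g * tauJ) * tauJ = g := by
  calc tauJ * (tauJ * g * tauJ) * tauJ = (tauJ * tauJ) * g * (tauJ * tauJ) := by group
    _ = g := by rw [tauJ_sq, one_mul, mul_one]

theorem tau_conj_mul (a b : J1 ≃ₗ[ℝ] J1) :
    tauJ * (a * b) * tauJ = (tauJ * a * tauJ) * (tauJ * b * tauJ) := by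
  calc tauJ * (a * b) * tauJ = tauJ * a * 1 * b * tauJ := by rw [mul_one]; group
    _ = (tauJ * a * tauJ) * (tauJ * b * tauJ) := by rw [← tauJ_sq]; group

/-- **Proposition (spn-14).** For each `i ∈ {1,2,3}`, the fixed subgroup of the
involution `g ↦ σᵢ g σᵢ` of `F₄₍₋₂₀₎` is the stabilizer of `Eᵢ`:
`(F₄₍₋₂₀₎)^{σ̃ᵢ} = (F₄₍₋₂₀₎)_{Eᵢ}`. In particular `K = (F₄₍₋₂₀₎)_{E₁} = Spin(9)` and
`(F₄₍₋₂₀₎)^{σ̃₂} = (F₄₍₋₂₀₎)_{E₂} ≅ Spin⁰(8,1) = (F₄₍₋₂₀₎)_{E₃}`. -/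
theorem stmt_18 :
    (∀ g, g ∈ F4 → (sigma1 * g = g * sigma1 ↔ g jE1 = jE1)) ∧
    (∀ g, g ∈ F4 → (sigma2 * g = g * sigma2 ↔ g jE2 = jE2)) ∧
    (∀ g, g ∈ F4 → (sigma3 * g = g * sigma3 ↔ g jE3 = jE3)) ∧
    Nonempty (↥(F4 ⊓ fixSubgroup jE2) ≃* ↥(F4 ⊓ fixSubgroup jE3)) := by

  refine ⟨fun g hg => key1 hg, fun g hg => key2 hg, fun g hg => key3 hg, ⟨?_⟩⟩
  exact
    { toFun := fun g => ⟨tauJ * g.1 * tauJ, Subgroup.mem_inf.mpr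
        ⟨tau_conj_memF4 (Subgroup.mem_inf.mp g.2).1, by
          have hfix : g.1 jE2 = jE2 := (Subgroup.mem_inf.mp g.2).2
          show (tauJ * g.1 * tauJ) jE3 = jE3
          simp only [le_mul_apply]
          rw [tauJ_jE3, hfix, tauJ_jE2]⟩⟩
      invFun := fun g => ⟨tauJ * g.1 * tauJ, Subgroup.mem_inf.mpr
        ⟨tau_conj_memF4 (Subgroup.mem_inf.mp g.2).1, by
          have hfix : g.1 jE3 = jE3 := (Subgroup.mem_inf.mp g.2).2
          show (tauJ * g.1 * tauJ) jE2 = jE2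
          simp only [le_mul_apply]
          rw [tauJ_jE2, hfix, tauJ_jE3]⟩⟩
      left_inv := fun g => Subtype.ext (tau_tau_conj g.1)
      right_inv := fun g => Subtype.ext (tau_tau_conj g.1)
      map_mul' := fun a b => Subtype.ext (tau_conj_mul a.1 b.1) }
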